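/- For all natural numbers n ≥ 1 and k with 0 ≤ k ≤ n−1, the higher-order Bernoulli numbers of negative order satisfy B_k^{(-n)} = (1/(n! · C(n+k,k))) · Σ_{j=0}^{n+k-1} E(n+k, j) · C(j, k), where E denotes the Eulerian numbers and C the ordinary binomial coefficient. (This is the corollary obtained by combining Gessel's relation S(n+k,n) = C(n+k,k) B_k^{(-n)} with the Eulerian-number expression for S(n+k,n).) -/

import Mathlib

open Finset

/-- The higher-order Bernoulli numbers of negative order `B_k^{(-n)}`, defined by the formal
exponential generating function `∑_{j≥0} B_j^{(-n)} t^j/j! = ((e^t - 1)/t)^n`, i.e. the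
`n`-th power of the formal power series `∑_{m≥0} t^m/(m+1)!`. -/
noncomputable def bernoulliNegOrder (n k : ℕ) : ℚ :=
  (k.factorial : ℚ) *
    PowerSeries.coeff (R := ℚ) k ((PowerSeries.mk fun m => (1 : ℚ) / (m + 1).factorial) ^ n)

/-- The Eulerian numbers `E(n,k) = ∑_{j=0}^k (-1)^j C(n+1,j) (k+1-j)^n`. -/
def eulerianNum (n k : ℕ) : ℤ :=
  ∑ j ∈ Finset.range (k + 1), (-1 : ℤ) ^ j * ((n + 1).choose j : ℤ) * ((k + 1 - j : ℕ) : ℤ) ^ n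


lemma int_absorb (n k : ℕ) : ((n.choose (k+1) : ℤ)) * (k+1) = (n.choose k : ℤ) * ((n:ℤ) - k) := by
  rcases lt_trichotomy k n with h | h | h
  · have := Nat.choose_succ_right_eq n k
    zify [Nat.le_of_lt h] at this
    exact this
  · subst h
    simp [Nat.choose_succ_self]
  · rw [Nat.choose_eq_zero_of_lt h, Nat.choose_eq_zero_of_lt (by omega)]
    simp

lemma diff_step (N : ℕ) (f : ℕ → ℤ) :
    ∑ i ∈ range (N+2), (-1:ℤ)^i * ((N+1).choose i : ℤ) * f i
      = ∑ i ∈ range (N+1), (-1:ℤ)^i * (N.choose i : ℤ) * (f i - f (i+1)) := by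
  have hA : ∑ i ∈ range (N+1), (-1:ℤ)^i * (N.choose i : ℤ) * f i
      = (∑ i ∈ range (N+1), (-1:ℤ)^(i+1) * (N.choose (i+1) : ℤ) * f (i+1)) + f 0 := by
    rw [Finset.sum_range_succ' (fun i => (-1:ℤ)^i * (N.choose i : ℤ) * f i) N,
      Finset.sum_range_succ (fun i => (-1:ℤ)^(i+1) * (N.choose (i+1) : ℤ) * f (i+1)) N]
    simp [Nat.choose_succ_self]
  rw [Finset.sum_range_succ' (fun i => (-1:ℤ)^i * ((N+1).choose i : ℤ) * f i) (N+1)]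
  have : ∀ i ∈ range (N+1), (-1:ℤ)^(i+1) * ((N+1).choose (i+1) : ℤ) * f (i+1)
      = (-1:ℤ)^(i+1) * (N.choose i : ℤ) * f (i+1) + (-1:ℤ)^(i+1) * (N.choose (i+1) : ℤ) * f (i+1) := by
    intro i _
    rw [Nat.choose_succ_succ]
    push_cast
    ring
  rw [Finset.sum_congr rfl this, Finset.sum_add_distrib]
  have h2 : ∑ i ∈ range (N+1), (-1:ℤ)^(i+1) * (N.choose (i+1) : ℤ) * f (i+1)
      = (∑ i ∈ range (N+1), (-1:ℤ)^i * (N.choose i : ℤ) * f i) - f 0 := by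
    rw [hA]; ring
  rw [h2]
  simp only [mul_sub, Finset.sum_sub_distrib]
  have h3 : ∀ i ∈ range (N+1), (-1:ℤ)^(i+1) * (N.choose i : ℤ) * f (i+1)
      = -((-1:ℤ)^i * (N.choose i : ℤ) * f (i+1)) := by intro i _; ring
  rw [Finset.sum_congr rfl h3, Finset.sum_neg_distrib]
  simp
  ring

lemma sub_pow_expand (m : ℕ) (b : ℤ) :
    b^m - (b-1)^m = ∑ t ∈ range m, (-((-1:ℤ)^(m-t) * (m.choose t : ℤ))) * b^t := by
  have h := add_pow b (-1 : ℤ) m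
  have h2 : (b - 1)^m = ∑ t ∈ range (m+1), b^t * (-1:ℤ)^(m-t) * (m.choose t : ℤ) := by
    rw [← h]; ring_nf
  rw [h2, sum_range_succ]
  simp only [Nat.sub_self, pow_zero, Nat.choose_self, Nat.cast_one, mul_one]
  have : b ^ m - (∑ x ∈ range m, b ^ x * (-1:ℤ) ^ (m - x) * (m.choose x : ℤ) + b ^ m)
      = ∑ x ∈ range m, -(b ^ x * (-1:ℤ) ^ (m - x) * (m.choose x : ℤ)) := by
    rw [Finset.sum_neg_distrib]; ring
  rw [this]
  exact Finset.sum_congr rfl (fun t ht => by ring)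

lemma alt_sum_vanish : ∀ N : ℕ, ∀ m : ℕ, m < N → ∀ a : ℤ,
    ∑ i ∈ range (N+1), (-1:ℤ)^i * (N.choose i : ℤ) * (a - i)^m = 0 := by
  intro N
  induction N with
  | zero => intro m hm; omega
  | succ N ih =>
    intro m hm a
    have hstep := diff_step N (fun i => (a - (i:ℕ))^m)
    rw [show N+1+1 = N+2 from rfl, hstep]
    have key : ∀ i : ℕ, ((a - (i:ℕ))^m - (a - ((i+1:ℕ):ℤ))^m)
        = ∑ t ∈ range m, (-((-1:ℤ)^(m-t) * (m.choose t : ℤ))) * (a - (i:ℕ))^t := by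
      intro i
      have h := sub_pow_expand m (a - (i:ℕ))
      push_cast
      push_cast at h
      rw [show a - ((i:ℤ)+1) = a - i - 1 by ring, ← h]
    calc ∑ i ∈ range (N+1), (-1:ℤ)^i * (N.choose i : ℤ) * ((a - (i:ℕ))^m - (a - ((i+1:ℕ):ℤ))^m)
        = ∑ i ∈ range (N+1), ∑ t ∈ range m,
            (-((-1:ℤ)^(m-t) * (m.choose t : ℤ))) * ((-1:ℤ)^i * (N.choose i : ℤ) * (a - (i:ℕ))^t) := by
          refine Finset.sum_congr rfl (fun i _ => ?_)
          rw [key i, Finset.mul_sum]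
          exact Finset.sum_congr rfl (fun t _ => by ring)
      _ = ∑ t ∈ range m, (-((-1:ℤ)^(m-t) * (m.choose t : ℤ))) *
            ∑ i ∈ range (N+1), (-1:ℤ)^i * (N.choose i : ℤ) * (a - (i:ℕ))^t := by
          rw [Finset.sum_comm]
          exact Finset.sum_congr rfl (fun t _ => by rw [Finset.mul_sum])
      _ = 0 := by
          refine Finset.sum_eq_zero (fun t ht => ?_)
          rw [ih t (by simp at ht; omega) a, mul_zero]

lemma eulerian_zero (m : ℕ) : eulerianNum m 0 = 1 := by
  simp [eulerianNum]

lemma eulerian_cast (m k : ℕ) :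
    eulerianNum m k = ∑ j ∈ range (k+1), (-1:ℤ)^j * ((m+1).choose j : ℤ) * (((k:ℤ)+1) - j)^m := by
  refine Finset.sum_congr rfl (fun j hj => ?_)
  simp only [mem_range] at hj
  have : ((k + 1 - j : ℕ) : ℤ) = ((k:ℤ)+1) - j := by
    have : j ≤ k + 1 := by omega
    push_cast [this]; ring
  rw [this]

lemma eulerian_succ_self (m : ℕ) : eulerianNum m (m+1) = 0 := by
  rw [eulerian_cast]
  have := alt_sum_vanish (m+1) m (by omega) ((m:ℤ)+2)
  rw [← this]
  refine Finset.sum_congr rfl (fun j _ => ?_)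
  push_cast
  ring_nf

lemma eulerian_self (m : ℕ) (hm : 1 ≤ m) : eulerianNum m m = 0 := by
  rw [eulerian_cast]
  have h := alt_sum_vanish (m+1) m (by omega) ((m:ℤ)+1)
  rw [Finset.sum_range_succ] at h
  have hlast : (-1:ℤ)^(m+1) * ((m+1).choose (m+1) : ℤ) * (((m:ℤ)+1) - ((m+1:ℕ):ℤ))^m = 0 := by
    have h0 : ((m:ℤ)+1) - ((m+1:ℕ):ℤ) = 0 := by push_cast; ring
    rw [h0, zero_pow (by omega), mul_zero]
  rw [hlast, add_zero] at h
  exact h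

lemma choose_id (m i : ℕ) (j : ℤ) :
    ((m+2).choose (i+1) : ℤ) * (j + 1 - i)
      = (j+2) * ((m+1).choose (i+1) : ℤ) - ((m:ℤ) - j) * ((m+1).choose i : ℤ) := by
  have hp : (((m+2)).choose (i+1) : ℤ) = ((m+1).choose i : ℤ) + ((m+1).choose (i+1) : ℤ) := by
    rw [Nat.choose_succ_succ (m+1) i]; push_cast; ring
  have ha := int_absorb (m+1) i
  push_cast at ha
  linear_combination (j + 1 - (i:ℤ)) * hp - ha

lemma eulerian_rec (m j : ℕ) :
    eulerianNum (m+1) (j+1)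
      = ((j:ℤ)+2) * eulerianNum m (j+1) + ((m:ℤ) - j) * eulerianNum m j := by
  rw [eulerian_cast, eulerian_cast, eulerian_cast, Finset.mul_sum, Finset.mul_sum]
  push_cast
  rw [Finset.sum_range_succ' (fun i => (-1:ℤ)^i * ((m+1+1).choose i : ℤ) * ((j:ℤ) + 1 + 1 - i)^(m+1)) (j+1)]
  rw [Finset.sum_range_succ' (fun i => ((j:ℤ)+2) * ((-1:ℤ)^i * ((m+1).choose i : ℤ) * ((j:ℤ) + 1 + 1 - i)^m)) (j+1)]
  push_cast
  have hterm : ∀ i ∈ range (j+1),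
      (-1:ℤ)^(i+1) * ((m+1+1).choose (i+1) : ℤ) * ((j:ℤ) + 1 + 1 - ((i:ℤ)+1))^(m+1)
        = ((j:ℤ)+2) * ((-1:ℤ)^(i+1) * ((m+1).choose (i+1) : ℤ) * ((j:ℤ) + 1 + 1 - ((i:ℤ)+1))^m)
          + ((m:ℤ) - j) * ((-1:ℤ)^i * ((m+1).choose i : ℤ) * (((j:ℤ)+1) - i)^m) := by
    intro i _
    have hc : ((j:ℤ) + 1 + 1 - ((i:ℤ)+1)) = ((j:ℤ)+1) - i := by ring
    rw [hc]
    have hid := choose_id m i (j:ℤ)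
    have h2 : ((m+1+1).choose (i+1) : ℤ) = ((m+2).choose (i+1) : ℤ) := by norm_num
    rw [h2]
    have hpow : (((j:ℤ)+1) - i)^(m+1) = (((j:ℤ)+1) - i) * (((j:ℤ)+1) - i)^m := by ring
    rw [hpow]
    linear_combination ((-1:ℤ)^(i+1) * (((j:ℤ)+1) - i)^m) * hid
  rw [Finset.sum_congr rfl hterm, Finset.sum_add_distrib]
  have h2 : ((m+1+1).choose 0 : ℤ) = ((m+1).choose 0 : ℤ) := by norm_num
  rw [h2]
  ring

lemma x_mul_choose (x j m : ℕ) :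
    (x:ℤ) * ((x+j).choose m : ℤ)
      = ((j:ℤ)+1) * ((x+j).choose (m+1) : ℤ) + ((m:ℤ)-j) * ((x+j+1).choose (m+1) : ℤ) := by
  have hp : ((x+j+1).choose (m+1) : ℤ) = ((x+j).choose m : ℤ) + ((x+j).choose (m+1) : ℤ) := by
    rw [Nat.choose_succ_succ (x+j) m]; push_cast; ring
  have ha := int_absorb (x+j) m
  push_cast at ha
  linear_combination (-((m:ℤ) - j)) * hp - ha

lemma worpitzky : ∀ m : ℕ, ∀ x : ℕ,
    (x:ℤ)^m = ∑ j ∈ range (m+1), eulerianNum m j * ((x+j).choose m : ℤ) := by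
  intro m
  induction m with
  | zero => intro x; simp [eulerian_zero]
  | succ m ih =>
    intro x
    have h1 : (x:ℤ)^(m+1) = ∑ j ∈ range (m+1), eulerianNum m j * ((x:ℤ) * ((x+j).choose m : ℤ)) := by
      rw [pow_succ, ih x, Finset.sum_mul]
      exact Finset.sum_congr rfl (fun j _ => by ring)
    rw [h1]
    have h2 : ∀ j ∈ range (m+1), eulerianNum m j * ((x:ℤ) * ((x+j).choose m : ℤ))
        = ((j:ℤ)+1) * eulerianNum m j * ((x+j).choose (m+1) : ℤ)
          + ((m:ℤ)-j) * eulerianNum m j * ((x+j+1).choose (m+1) : ℤ) := by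
      intro j _
      rw [x_mul_choose x j m]
      ring
    rw [Finset.sum_congr rfl h2, Finset.sum_add_distrib]
    -- A = ∑_{j∈range(m+1)} (j+1) E(m,j) C(x+j,m+1)
    have hA : ∑ j ∈ range (m+1), ((j:ℤ)+1) * eulerianNum m j * ((x+j).choose (m+1) : ℤ)
        = (∑ j ∈ range (m+1), ((j:ℤ)+2) * eulerianNum m (j+1) * ((x+j+1).choose (m+1) : ℤ))
          + ((x).choose (m+1) : ℤ) := by
      rw [Finset.sum_range_succ' (fun j => ((j:ℤ)+1) * eulerianNum m j * ((x+j).choose (m+1) : ℤ)) m,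
        Finset.sum_range_succ (fun j => ((j:ℤ)+2) * eulerianNum m (j+1) * ((x+j+1).choose (m+1) : ℤ)) m]
      rw [eulerian_succ_self m]
      simp only [eulerian_zero, ← Nat.add_assoc]
      push_cast
      have hc : ∀ j ∈ range m, ((j:ℤ)+1+1) * eulerianNum m (j+1) * (((x+j+1).choose (m+1) : ℕ) : ℤ)
          = ((j:ℤ)+2) * eulerianNum m (j+1) * (((x+j+1).choose (m+1) : ℕ) : ℤ) := fun j _ => by ring
      rw [Finset.sum_congr rfl hc]
      simp only [Nat.add_zero]
      ring
    rw [hA]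
    -- target side
    rw [Finset.sum_range_succ' (fun j => eulerianNum (m+1) j * ((x+j).choose (m+1) : ℤ)) (m+1)]
    have h3 : ∀ j ∈ range (m+1), eulerianNum (m+1) (j+1) * ((x+(j+1)).choose (m+1) : ℤ)
        = ((j:ℤ)+2) * eulerianNum m (j+1) * ((x+j+1).choose (m+1) : ℤ)
          + ((m:ℤ)-j) * eulerianNum m j * ((x+j+1).choose (m+1) : ℤ) := by
      intro j _
      rw [eulerian_rec m j]
      ring
    rw [Finset.sum_congr rfl h3, Finset.sum_add_distrib, eulerian_zero]
    simp only [Nat.add_zero]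
    push_cast
    ring

lemma alt_choose_sum (m : ℕ) : ∀ n : ℕ, n ≤ m → ∀ j : ℕ,
    ∑ x ∈ range (n+1), (-1:ℤ)^(n+x) * (n.choose x : ℤ) * ((x+j).choose m : ℤ)
      = (j.choose (m-n) : ℤ) := by
  intro n
  induction n with
  | zero => intro _ j; simp
  | succ n ih =>
    intro hnm j
    have hn : n ≤ m := by omega
    -- IH at j+1, normalized
    have hIH1 : ∑ x ∈ range (n+1), (-1:ℤ)^(n+x) * (n.choose x : ℤ) * ((x+j+1).choose m : ℤ)
        = ((j+1).choose (m-n) : ℤ) := by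
      rw [← ih hn (j+1)]
      exact Finset.sum_congr rfl (fun x _ => by rw [Nat.add_assoc])
    -- IH at j, peeled
    have hIH2 : ∑ x ∈ range n, (-1:ℤ)^(n+(x+1)) * (n.choose (x+1) : ℤ) * ((x+1+j).choose m : ℤ)
        + (-1:ℤ)^(n+0) * (n.choose 0 : ℤ) * ((0+j).choose m : ℤ)
        = (j.choose (m-n) : ℤ) := by
      rw [← Finset.sum_range_succ' (fun x => (-1:ℤ)^(n+x) * (n.choose x : ℤ) * ((x+j).choose m : ℤ)) n]
      exact ih hn j
    have hS2 : ∑ x ∈ range (n+1), (-1:ℤ)^(n+x) * (n.choose (x+1) : ℤ) * ((x+j+1).choose m : ℤ)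
        = -((j.choose (m-n) : ℤ)) + (-1:ℤ)^n * (j.choose m : ℤ) := by
      rw [Finset.sum_range_succ]
      rw [Nat.choose_succ_self, Nat.cast_zero, mul_zero, zero_mul, add_zero]
      have : ∀ x ∈ range n, (-1:ℤ)^(n+x) * (n.choose (x+1) : ℤ) * ((x+j+1).choose m : ℤ)
          = -((-1:ℤ)^(n+(x+1)) * (n.choose (x+1) : ℤ) * ((x+1+j).choose m : ℤ)) := by
        intro x _
        rw [show x+1+j = x+j+1 by omega]
        rw [pow_add, pow_add]
        ring
      rw [Finset.sum_congr rfl this, Finset.sum_neg_distrib]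
      have := hIH2
      simp only [Nat.add_zero, pow_add, pow_zero, Nat.choose_zero_right, Nat.cast_one,
        Nat.zero_add] at this ⊢
      linarith [this]
    -- main computation
    rw [Finset.sum_range_succ'
      (fun x => (-1:ℤ)^(n+1+x) * ((n+1).choose x : ℤ) * ((x+j).choose m : ℤ)) (n+1)]
    have hterm : ∀ x ∈ range (n+1),
        (-1:ℤ)^(n+1+(x+1)) * ((n+1).choose (x+1) : ℤ) * ((x+1+j).choose m : ℤ)
          = (-1:ℤ)^(n+x) * (n.choose x : ℤ) * ((x+j+1).choose m : ℤ)
            + (-1:ℤ)^(n+x) * (n.choose (x+1) : ℤ) * ((x+j+1).choose m : ℤ) := by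
      intro x _
      rw [show x+1+j = x+j+1 by omega, Nat.choose_succ_succ n x]
      push_cast
      have : (-1:ℤ)^(n+1+(x+1)) = (-1:ℤ)^(n+x) := by
        rw [show n+1+(x+1) = (n+x)+2 by omega, pow_add]
        norm_num
      rw [this]
      ring
    rw [Finset.sum_congr rfl hterm, Finset.sum_add_distrib, hIH1, hS2]
    have hcast : ((j+1).choose (m-n) : ℤ) - (j.choose (m-n) : ℤ) = (j.choose (m-(n+1)) : ℤ) := by
      have hr : m - n = (m-(n+1)) + 1 := by omega
      rw [hr, Nat.choose_succ_succ j (m-(n+1))]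
      push_cast
      ring
    have hsign : (-1:ℤ)^(n+1+0) = -((-1:ℤ)^n) := by
      rw [show n+1+0 = n+1 by omega, pow_succ]; ring
    rw [hsign]
    rw [show (0+j : ℕ) = j by omega]
    simp only [Nat.choose_zero_right, Nat.cast_one]
    linarith [hcast]

lemma key_identity (n k : ℕ) (hn : 1 ≤ n) :
    ∑ j ∈ range (n+k), eulerianNum (n+k) j * ((j.choose k : ℕ) : ℤ)
      = ∑ x ∈ range (n+1), (-1:ℤ)^(n+x) * (n.choose x : ℤ) * (x:ℤ)^(n+k) := by
  have hm : 1 ≤ n + k := by omega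
  calc ∑ j ∈ range (n+k), eulerianNum (n+k) j * ((j.choose k : ℕ) : ℤ)
      = ∑ j ∈ range (n+k+1), eulerianNum (n+k) j * ((j.choose k : ℕ) : ℤ) := by
        rw [Finset.sum_range_succ, eulerian_self (n+k) hm, zero_mul, add_zero]
    _ = ∑ j ∈ range (n+k+1), eulerianNum (n+k) j *
          ∑ x ∈ range (n+1), (-1:ℤ)^(n+x) * (n.choose x : ℤ) * ((x+j).choose (n+k) : ℤ) := by
        refine Finset.sum_congr rfl (fun j _ => ?_)
        rw [alt_choose_sum (n+k) n (by omega) j, show n+k-n = k by omega]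
    _ = ∑ x ∈ range (n+1), ∑ j ∈ range (n+k+1),
          (-1:ℤ)^(n+x) * (n.choose x : ℤ) * (eulerianNum (n+k) j * ((x+j).choose (n+k) : ℤ)) := by
        rw [Finset.sum_comm]
        refine Finset.sum_congr rfl (fun j _ => ?_)
        rw [Finset.mul_sum]
        exact Finset.sum_congr rfl (fun x _ => by ring)
    _ = ∑ x ∈ range (n+1), (-1:ℤ)^(n+x) * (n.choose x : ℤ) * (x:ℤ)^(n+k) := by
        refine Finset.sum_congr rfl (fun x _ => ?_)
        rw [← Finset.mul_sum, ← worpitzky (n+k) x]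

open PowerSeries in

lemma X_mul_mk : (PowerSeries.X : ℚ⟦X⟧) * (PowerSeries.mk fun m => (1 : ℚ) / (m + 1).factorial)
    = PowerSeries.exp ℚ - 1 := by
  ext d
  cases d with
  | zero => simp [coeff_zero_X_mul, coeff_exp, coeff_one]
  | succ d =>
    rw [coeff_succ_X_mul, map_sub, coeff_exp, coeff_one]
    simp

open PowerSeries in

lemma bern_eq (n k : ℕ) : bernoulliNegOrder n k
    = (k.factorial : ℚ) * ∑ i ∈ range (n+1),
        (-1:ℚ)^(n-i) * (n.choose i : ℚ) * ((i:ℚ)^(k+n) / ((k+n).factorial : ℚ)) := by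
  rw [bernoulliNegOrder]
  congr 1
  have h1 : PowerSeries.coeff (R := ℚ) k ((PowerSeries.mk fun m => (1 : ℚ) / (m + 1).factorial) ^ n)
      = PowerSeries.coeff (R := ℚ) (k+n) ((PowerSeries.exp ℚ - 1) ^ n) := by
    rw [← X_mul_mk] ; rw [mul_pow, coeff_X_pow_mul]
  rw [h1]
  have h2 : (PowerSeries.exp ℚ - 1 : ℚ⟦X⟧) ^ n
      = ∑ i ∈ range (n+1), PowerSeries.C (R := ℚ) ((-1:ℚ)^(n-i) * (n.choose i : ℚ)) * (exp ℚ)^i := by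
    rw [sub_eq_add_neg, add_pow]
    refine Finset.sum_congr rfl (fun i _ => ?_)
    have : (-1 : ℚ⟦X⟧) = PowerSeries.C (R := ℚ) (-1) := by simp
    rw [this, ← map_pow]
    have hc : ((n.choose i : ℕ) : ℚ⟦X⟧) = PowerSeries.C (R := ℚ) ((n.choose i : ℕ) : ℚ) := by
      simp
    rw [hc, mul_assoc, mul_comm ((exp ℚ)^i), mul_assoc]
    rw [← mul_assoc, ← map_mul]
  rw [h2, map_sum]
  refine Finset.sum_congr rfl (fun i _ => ?_)
  rw [coeff_C_mul, exp_pow_eq_rescale_exp, coeff_rescale, coeff_exp]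
  simp only [Algebra.algebraMap_self, RingHom.id_apply]
  ring

theorem bernoulliNegOrder_eq_sum_eulerian (n k : ℕ) (hn : 1 ≤ n) (hk : k ≤ n - 1) :
    bernoulliNegOrder n k =
      (1 / ((n.factorial : ℚ) * ((n + k).choose k : ℚ))) *
        ∑ j ∈ Finset.range (n + k), (eulerianNum (n + k) j : ℚ) * (j.choose k : ℚ) := by
  have hkeyZ := key_identity n k hn
  have hkey : ∑ j ∈ Finset.range (n+k), ((eulerianNum (n+k) j : ℚ) * (j.choose k : ℚ))
      = ∑ x ∈ range (n+1), (-1:ℚ)^(n+x) * (n.choose x : ℚ) * (x:ℚ)^(n+k) := by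
    have h := congrArg (fun z : ℤ => (z : ℚ)) hkeyZ
    push_cast at h
    exact h
  rw [hkey, bern_eq n k, Finset.mul_sum, Finset.mul_sum]
  refine Finset.sum_congr rfl (fun i hi => ?_)
  simp only [mem_range] at hi
  have hsign : (-1:ℚ)^(n+i) = (-1:ℚ)^(n-i) := by
    have h : n+i = (n-i) + 2*i := by omega
    rw [h, pow_add, pow_mul]
    norm_num
  have hfacN : (n+k).choose k * k.factorial * n.factorial = (n+k).factorial := by
    have h := Nat.choose_mul_factorial_mul_factorial (show k ≤ n+k by omega)
    rw [show n+k-k = n by omega] at h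
    exact h
  have hfac : ((k+n).factorial : ℚ) = ((n+k).choose k : ℚ) * (k.factorial : ℚ) * (n.factorial : ℚ) := by
    rw [show k+n = n+k by omega, ← hfacN]
    push_cast
    ring
  have h1 : ((k+n).factorial : ℚ) ≠ 0 := by positivity
  have h2 : (n.factorial : ℚ) ≠ 0 := by positivity
  have h3 : ((n+k).choose k : ℚ) ≠ 0 := by
    have := Nat.choose_pos (show k ≤ n+k by omega)
    positivity
  have h4 : (k.factorial : ℚ) ≠ 0 := by positivity
  rw [hsign]
  rw [show (i:ℚ)^(n+k) = (i:ℚ)^(k+n) by rw [show n+k = k+n by omega]]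
  field_simp
  rw [hfac]
  ring
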